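/- Let X, Y be real Banach spaces and let R : X → Y be a bounded linear operator. Define an equivalent norm on X by |||x||| = ‖x‖_X + ‖R(x)‖_Y for x ∈ X. Then the closed unit ball of the dual space (X,|||·|||)* equals B_{X*} + R*(B_{Y*}), where B_{X*} is the closed unit ball of X* for the original dual norm, R* : Y* → X* is the adjoint operator, and B_{Y*} is the closed unit ball of Y*. -/

import Mathlib

noncomputable section
open NormedSpace

variable {X : Type*} [NormedAddCommGroup X] [NormedSpace ℝ X]

/-- The dual norm associated to an equivalent norm `p`. -/
def dualNormOf (p : X → ℝ) (f : StrongDual ℝ X) : ℝ :=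
  sSup ((fun x => |f x|) '' {x : X | p x ≤ 1})

theorem dual_ball_of_sum_norm
    (X Y : Type*) [NormedAddCommGroup X] [NormedSpace ℝ X] [CompleteSpace X]
    [NormedAddCommGroup Y] [NormedSpace ℝ Y] [CompleteSpace Y]
    (R : X →L[ℝ] Y) :
    {f : StrongDual ℝ X | dualNormOf (fun x : X => ‖x‖ + ‖R x‖) f ≤ 1} =
      {f : StrongDual ℝ X | ∃ (g : StrongDual ℝ X) (h : StrongDual ℝ Y),
        ‖g‖ ≤ 1 ∧ ‖h‖ ≤ 1 ∧ f = g + h.comp R} := by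
  ext f
  simp only [Set.mem_setOf_eq]
  constructor
  · intro hf
    -- step 1: pointwise bound
    have key : ∀ x : X, |f x| ≤ ‖x‖ + ‖R x‖ := by
      intro x
      rcases eq_or_ne x 0 with rfl | hx
      · simp
      have hpos : 0 < ‖x‖ + ‖R x‖ :=
        add_pos_of_pos_of_nonneg (norm_pos_iff.2 hx) (norm_nonneg _)
      set c : ℝ := (‖x‖ + ‖R x‖)⁻¹ with hc
      have hcpos : 0 < c := inv_pos.2 hpos
      have hmem : c • x ∈ {x : X | ‖x‖ + ‖R x‖ ≤ 1} := by
        simp only [Set.mem_setOf_eq, map_smul, norm_smul, Real.norm_eq_abs,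
          abs_of_pos hcpos]
        rw [← mul_add, hc, inv_mul_cancel₀ hpos.ne']
      have hbdd : BddAbove ((fun x => |f x|) '' {x : X | ‖x‖ + ‖R x‖ ≤ 1}) := by
        refine ⟨‖f‖, ?_⟩
        rintro - ⟨z, hz, rfl⟩
        calc |f z| ≤ ‖f‖ * ‖z‖ := f.le_opNorm z
        _ ≤ ‖f‖ * 1 := by
            refine mul_le_mul_of_nonneg_left ?_ (norm_nonneg _)
            exact le_trans (le_add_of_nonneg_right (norm_nonneg _)) hz
        _ = ‖f‖ := mul_one _
      have hle : |f (c • x)| ≤ 1 := le_trans (le_csSup hbdd ⟨c • x, hmem, rfl⟩) hf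
      have : c * |f x| ≤ 1 := by
        simpa [map_smul, abs_mul, abs_of_pos hcpos] using hle
      calc |f x| = (‖x‖ + ‖R x‖) * (c * |f x|) := by
            rw [← mul_assoc, hc, mul_inv_cancel₀ hpos.ne', one_mul]
        _ ≤ (‖x‖ + ‖R x‖) * 1 := mul_le_mul_of_nonneg_left this hpos.le
        _ = ‖x‖ + ‖R x‖ := mul_one _
    -- step 2: Hahn-Banach extension on X × Y with sublinear functional N
    set N : X × Y → ℝ := fun z => ‖z.1‖ + ‖z.2‖ with hN
    have N_hom : ∀ c : ℝ, 0 < c → ∀ z : X × Y, N (c • z) = c * N z := by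
      intro c hc z
      simp [hN, norm_smul, abs_of_pos hc, mul_add]
    have N_add : ∀ z w : X × Y, N (z + w) ≤ N z + N w := by
      intro z w
      have h1 := norm_add_le z.1 w.1
      have h2 := norm_add_le z.2 w.2
      simp only [hN, Prod.fst_add, Prod.snd_add]
      linarith
    set φ : R.toLinearMap.graph →ₗ[ℝ] ℝ :=
      f.toLinearMap.comp ((LinearMap.fst ℝ X Y).comp R.toLinearMap.graph.subtype) with hφ
    have hφle : ∀ z : R.toLinearMap.graph, φ z ≤ N z := by
      rintro ⟨⟨x, y⟩, hz⟩
      have hz' : y = R x := hz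
      calc φ ⟨(x, y), hz⟩ = f x := rfl
        _ ≤ |f x| := le_abs_self _
        _ ≤ ‖x‖ + ‖R x‖ := key x
        _ = N (x, y) := by rw [hz']
    obtain ⟨G, hG1, hG2⟩ :=
      exists_extension_of_le_sublinear ⟨R.toLinearMap.graph, φ⟩ N N_hom N_add hφle
    have habs : ∀ z : X × Y, |G z| ≤ N z := by
      intro z
      rw [abs_le]
      constructor
      · have := hG2 (-z)
        simp only [map_neg, hN, Prod.fst_neg, Prod.snd_neg, norm_neg] at this ⊢
        linarith
      · exact hG2 z
    set g : StrongDual ℝ X := LinearMap.mkContinuous (G.comp (LinearMap.inl ℝ X Y)) 1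
      (fun x => by simpa [hN, Real.norm_eq_abs] using habs (x, 0)) with hg
    set h : StrongDual ℝ Y := LinearMap.mkContinuous (G.comp (LinearMap.inr ℝ X Y)) 1
      (fun y => by simpa [hN, Real.norm_eq_abs] using habs (0, y)) with hh
    refine ⟨g, h, LinearMap.mkContinuous_norm_le _ zero_le_one _,
      LinearMap.mkContinuous_norm_le _ zero_le_one _, ?_⟩
    ext x
    have hmem : ((x, R x) : X × Y) ∈ R.toLinearMap.graph := rfl
    have hagree : G (x, R x) = f x := hG1 ⟨(x, R x), hmem⟩
    have hsplit : G (x, R x) = G (x, 0) + G (0, R x) := by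
      rw [← map_add]
      norm_num
    simp only [ContinuousLinearMap.add_apply, ContinuousLinearMap.comp_apply]
    rw [← hagree, hsplit]
    rfl
  · rintro ⟨g, h, hg, hh, rfl⟩
    refine csSup_le ⟨|((g + h.comp R)) 0|, ⟨0, by simp, rfl⟩⟩ ?_
    rintro - ⟨x, hx, rfl⟩
    simp only [Set.mem_setOf_eq] at hx
    calc |(g + h.comp R) x| = |g x + h (R x)| := rfl
      _ ≤ |g x| + |h (R x)| := abs_add_le _ _
      _ ≤ ‖g‖ * ‖x‖ + ‖h‖ * ‖R x‖ := add_le_add (g.le_opNorm x) (h.le_opNorm (R x))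
      _ ≤ 1 * ‖x‖ + 1 * ‖R x‖ := by gcongr
      _ = ‖x‖ + ‖R x‖ := by ring
      _ ≤ 1 := hx
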